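/- For all powers of two m and n with m ≥ 16, n ≥ 4, and m ≤ 4n, letting N be the subgroup of G = G(m,n) generated by a^4, the subgroup Ω(G/N) of elements of order dividing 2 in the abelian quotient G/N is contained in the Frattini subgroup of G/N. -/

import Mathlib

/-- The relators of the presentation `⟨a, b | a^m, b^n, [b,a] = a^4⟩`, where `a` is
`FreeGroup.of true`, `b` is `FreeGroup.of false`, and `[b,a] = b⁻¹a⁻¹ba`. -/
def GRels (m n : ℕ) : Set (FreeGroup Bool) :=
  { FreeGroup.of true ^ m,
    FreeGroup.of false ^ n,
    (FreeGroup.of false)⁻¹ * (FreeGroup.of true)⁻¹ * FreeGroup.of false *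
      FreeGroup.of true * (FreeGroup.of true ^ 4)⁻¹ }

/-- The group `G(m, n) = ⟨a, b | a^m, b^n, [b,a] = a^4⟩`. -/
abbrev Gmn (m n : ℕ) : Type := PresentedGroup (GRels m n)

/-- The image of the generator `a` in `G(m, n)`. -/
def gen_a (m n : ℕ) : Gmn m n := PresentedGroup.of true

/-- The image of the generator `b` in `G(m, n)`. -/
def gen_b (m n : ℕ) : Gmn m n := PresentedGroup.of false

namespace GmnAux

lemma mk_rel_eq_one (m n : ℕ) {r : FreeGroup Bool} (h : r ∈ GRels m n) :
    PresentedGroup.mk (GRels m n) r = 1 :=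
  (QuotientGroup.eq_one_iff r).mpr (Subgroup.subset_normalClosure h)

lemma rel_b (m n : ℕ) : gen_b m n ^ n = 1 := by
  have := mk_rel_eq_one m n (r := FreeGroup.of false ^ n) (by right; left; rfl)
  simpa [gen_b, PresentedGroup.of, map_pow] using this

lemma rel_c (m n : ℕ) :
    (gen_b m n)⁻¹ * (gen_a m n)⁻¹ * gen_b m n * gen_a m n * (gen_a m n ^ 4)⁻¹ = 1 := by
  have := mk_rel_eq_one m n
    (r := (FreeGroup.of false)⁻¹ * (FreeGroup.of true)⁻¹ * FreeGroup.of false *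
      FreeGroup.of true * (FreeGroup.of true ^ 4)⁻¹) (by right; right; rfl)
  simpa [gen_a, gen_b, PresentedGroup.of, map_mul, map_inv, map_pow] using this

abbrev Tgt (n : ℕ) : Type := Multiplicative (ZMod 4 × ZMod n)

def fgen (n : ℕ) : Bool → Tgt n :=
  fun x => Multiplicative.ofAdd (if x then ((1 : ZMod 4), (0 : ZMod n)) else (0, 1))

lemma comm_aux {T : Type*} [CommGroup T] (x y : T) : y⁻¹ * x⁻¹ * y * x = 1 := by
  rw [mul_assoc y⁻¹, mul_comm x⁻¹ y, ← mul_assoc, inv_mul_cancel, one_mul, inv_mul_cancel]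

lemma smul_pair (n k : ℕ) :
    k • ((1 : ZMod 4), (0 : ZMod n)) = ((k : ZMod 4), 0) := by
  rw [Prod.smul_mk, smul_zero, nsmul_eq_mul, mul_one]

lemma smul_pair' (n k : ℕ) :
    k • ((0 : ZMod 4), (1 : ZMod n)) = (0, (k : ZMod n)) := by
  rw [Prod.smul_mk, smul_zero, nsmul_eq_mul, mul_one]

lemma zsmul_pair (n : ℕ) (k : ℤ) :
    k • ((1 : ZMod 4), (0 : ZMod n)) = ((k : ZMod 4), 0) := by
  rw [Prod.smul_mk, smul_zero, zsmul_eq_mul, mul_one]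

lemma zsmul_pair' (n : ℕ) (k : ℤ) :
    k • ((0 : ZMod 4), (1 : ZMod n)) = (0, (k : ZMod n)) := by
  rw [Prod.smul_mk, smul_zero, zsmul_eq_mul, mul_one]

lemma fgen_true_pow4 (n : ℕ) : fgen n true ^ 4 = 1 := by
  show Multiplicative.ofAdd ((1 : ZMod 4), (0 : ZMod n)) ^ 4
      = Multiplicative.ofAdd (0 : ZMod 4 × ZMod n)
  rw [← ofAdd_nsmul, smul_pair, show ((4:ℕ):ZMod 4) = 0 from by decide]
  rfl

lemma fgen_rels (m n : ℕ) (hm4 : 4 ∣ m) :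
    ∀ r ∈ GRels m n, FreeGroup.lift (fgen n) r = 1 := by
  intro r hr
  rcases hr with h | h | h <;> subst h <;>
    simp only [map_mul, map_inv, map_pow, FreeGroup.lift_apply_of]
  · show Multiplicative.ofAdd ((1 : ZMod 4), (0 : ZMod n)) ^ m
        = Multiplicative.ofAdd (0 : ZMod 4 × ZMod n)
    rw [← ofAdd_nsmul, smul_pair, (ZMod.natCast_eq_zero_iff m 4).mpr hm4]
    rfl
  · show Multiplicative.ofAdd ((0 : ZMod 4), (1 : ZMod n)) ^ n
        = Multiplicative.ofAdd (0 : ZMod 4 × ZMod n)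
    rw [← ofAdd_nsmul, smul_pair', ZMod.natCast_self]
    rfl
  · rw [fgen_true_pow4, inv_one, mul_one]
    exact comm_aux _ _

def Phi (m n : ℕ) (hm4 : 4 ∣ m) : Gmn m n →* Tgt n :=
  PresentedGroup.toGroup (fgen_rels m n hm4)

lemma Phi_gen_a (m n : ℕ) (hm4 : 4 ∣ m) :
    Phi m n hm4 (gen_a m n) = Multiplicative.ofAdd ((1 : ZMod 4), (0 : ZMod n)) :=
  PresentedGroup.toGroup.of _

lemma Phi_gen_b (m n : ℕ) (hm4 : 4 ∣ m) :
    Phi m n hm4 (gen_b m n) = Multiplicative.ofAdd ((0 : ZMod 4), (1 : ZMod n)) :=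
  PresentedGroup.toGroup.of _

end GmnAux

open GmnAux

/-- The subgroup `Ω(G/N)` of elements of order dividing 2 in the abelian quotient
`G(m,n)/N`, where `N = ⟨a^4⟩` (which is normal, as recorded by the instance
hypothesis), is contained in the Frattini subgroup of `G(m,n)/N`. -/
theorem Gmn_omega_le_frattini (m n : ℕ)
    (hm : ∃ i, m = 2 ^ i) (hn : ∃ j, n = 2 ^ j)
    (hm16 : 16 ≤ m) (hn4 : 4 ≤ n) (hmn : m ≤ 4 * n)
    [hN : (Subgroup.closure {gen_a m n ^ 4} : Subgroup (Gmn m n)).Normal] :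
    ∀ x : Gmn m n ⧸ (Subgroup.closure {gen_a m n ^ 4} : Subgroup (Gmn m n)),
      x ^ 2 = 1 →
      x ∈ frattini (Gmn m n ⧸ (Subgroup.closure {gen_a m n ^ 4} : Subgroup (Gmn m n))) := by
  -- divisibility facts
  have hm4 : 4 ∣ m := by
    obtain ⟨i, rfl⟩ := hm
    have h2 : 2 ≤ i := by
      by_contra h
      push_neg at h
      interval_cases i <;> omega
    have := pow_dvd_pow 2 h2
    norm_num at this
    exact this
  have hn4dvd : 4 ∣ n := by
    obtain ⟨j, rfl⟩ := hn
    have h2 : 2 ≤ j := by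
      by_contra h
      push_neg at h
      interval_cases j <;> omega
    have := pow_dvd_pow 2 h2
    norm_num at this
    exact this
  obtain ⟨k, hk⟩ := hn4dvd
  -- set up the quotient
  set N : Subgroup (Gmn m n) := Subgroup.closure {gen_a m n ^ 4} with hNdef
  let π : Gmn m n →* Gmn m n ⧸ N := QuotientGroup.mk' N
  set A : Gmn m n ⧸ N := π (gen_a m n) with hAdef
  set B : Gmn m n ⧸ N := π (gen_b m n) with hBdef
  have hA4 : A ^ 4 = 1 := by
    rw [hAdef, ← map_pow]
    exact (QuotientGroup.eq_one_iff _).mpr (Subgroup.subset_closure rfl)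
  have hBn : B ^ n = 1 := by
    rw [hBdef, ← map_pow, rel_b, map_one]
  have hcomm : Commute A B := by
    have h := congrArg π (rel_c m n)
    simp only [map_mul, map_inv, map_pow, map_one] at h
    rw [← hAdef, ← hBdef, hA4, inv_one, mul_one] at h
    have h2 := congrArg (fun z => A * (B * z)) h
    simp only [mul_one] at h2
    rw [show A * (B * (B⁻¹ * A⁻¹ * B * A)) = B * A by group] at h2
    exact (commute_iff_eq A B).mpr h2.symm
  -- product rearrangement
  have mul_form : ∀ c d e f : ℤ,
      (A ^ c * B ^ d) * (A ^ e * B ^ f) = A ^ (c + e) * B ^ (d + f) := by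
    intro c d e f
    have hc : B ^ d * A ^ e = A ^ e * B ^ d := (hcomm.symm.zpow_zpow d e).eq
    calc (A ^ c * B ^ d) * (A ^ e * B ^ f)
        = A ^ c * (B ^ d * A ^ e) * B ^ f := by simp [mul_assoc]
      _ = A ^ c * (A ^ e * B ^ d) * B ^ f := by rw [hc]
      _ = A ^ (c + e) * B ^ (d + f) := by simp [zpow_add, mul_assoc]
  -- every element has the normal form A^c * B^d
  have hgen : ∀ x : Gmn m n ⧸ N, ∃ c d : ℤ, x = A ^ c * B ^ d := by
    intro x
    obtain ⟨g, rfl⟩ := QuotientGroup.mk'_surjective N x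
    let H : Subgroup (Gmn m n) :=
      { carrier := {g | ∃ c d : ℤ, π g = A ^ c * B ^ d}
        one_mem' := ⟨0, 0, by simp⟩
        mul_mem' := by
          rintro g1 g2 ⟨c, d, h1⟩ ⟨e, f, h2⟩
          exact ⟨c + e, d + f, by rw [map_mul, h1, h2, mul_form]⟩
        inv_mem' := by
          rintro g1 ⟨c, d, h1⟩
          refine ⟨-c, -d, ?_⟩
          rw [map_inv, h1]
          rw [show A ^ (-c) * B ^ (-d) = (A ^ c * B ^ d)⁻¹ by
            rw [mul_inv_rev, ← zpow_neg, ← zpow_neg, (hcomm.zpow_zpow (-c) (-d)).eq]] }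
    exact PresentedGroup.generated_by _ H
      (by
        intro j
        cases j
        · exact ⟨0, 1, by rw [zpow_zero, zpow_one, one_mul]; rfl⟩
        · exact ⟨1, 0, by rw [zpow_one, zpow_zero, mul_one]; rfl⟩) g
  -- the homomorphism to ZMod 4 × ZMod n
  have hker : N ≤ (Phi m n hm4).ker := by
    rw [hNdef, Subgroup.closure_le, Set.singleton_subset_iff, SetLike.mem_coe,
      MonoidHom.mem_ker, map_pow, Phi_gen_a]
    exact fgen_true_pow4 n
  let Φ : (Gmn m n ⧸ N) →* Tgt n := QuotientGroup.lift N (Phi m n hm4) hker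
  have hΦA : Φ A = Multiplicative.ofAdd ((1 : ZMod 4), (0 : ZMod n)) := by
    rw [hAdef]
    exact (QuotientGroup.lift_mk' N hker _).trans (Phi_gen_a m n hm4)
  have hΦB : Φ B = Multiplicative.ofAdd ((0 : ZMod 4), (1 : ZMod n)) := by
    rw [hBdef]
    exact (QuotientGroup.lift_mk' N hker _).trans (Phi_gen_b m n hm4)
  -- exponent
  have hexp : ∀ g : Gmn m n ⧸ N, g ^ n = 1 := by
    intro g
    obtain ⟨c, d, rfl⟩ := hgen g
    rw [(hcomm.zpow_zpow c d).mul_pow]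
    have hAn : A ^ n = 1 := by
      rw [show A ^ n = (A ^ 4) ^ k from by rw [← pow_mul]; exact congrArg _ hk, hA4, one_pow]
    have h1 : (A ^ c) ^ n = 1 := by
      rw [← zpow_natCast (A ^ c) n, ← zpow_mul, mul_comm, zpow_mul, zpow_natCast, hAn, one_zpow]
    have h2 : (B ^ d) ^ n = 1 := by
      rw [← zpow_natCast (B ^ d) n, ← zpow_mul, mul_comm, zpow_mul, zpow_natCast, hBn, one_zpow]
    rw [h1, h2, one_mul]
  -- every square-root-of-one is a square
  intro x hx
  obtain ⟨c, d, rfl⟩ := hgen x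
  have hφx : Φ (A ^ c * B ^ d)
      = Multiplicative.ofAdd (((c : ZMod 4), (d : ZMod n)) : ZMod 4 × ZMod n) := by
    rw [map_mul, map_zpow, map_zpow, hΦA, hΦB, ← ofAdd_zsmul, ← ofAdd_zsmul,
      zsmul_pair, zsmul_pair', ← ofAdd_add]
    norm_num [Prod.ext_iff]
  have hφ1 : Φ ((A ^ c * B ^ d) ^ 2) = 1 := by rw [hx, map_one]
  rw [map_pow, hφx, ← ofAdd_nsmul] at hφ1
  rw [ofAdd_eq_one, Prod.smul_mk, Prod.mk_eq_zero] at hφ1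
  obtain ⟨hc1, hd1⟩ := hφ1
  rw [nsmul_eq_mul] at hc1 hd1
  have hc2 : (((2 * c : ℤ)) : ZMod 4) = 0 := by push_cast; push_cast at hc1; exact hc1
  have hd2 : (((2 * d : ℤ)) : ZMod n) = 0 := by push_cast; push_cast at hd1; exact hd1
  rw [ZMod.intCast_zmod_eq_zero_iff_dvd] at hc2 hd2
  norm_num at hc2
  obtain ⟨c', hc'⟩ : ∃ c' : ℤ, c = 2 * c' := by
    obtain ⟨u, hu⟩ := hc2
    exact ⟨u, by omega⟩
  obtain ⟨t, ht⟩ := hd2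
  have hd' : d = 2 * ((k : ℤ) * t) := by
    have hnk : (n : ℤ) = 4 * (k : ℤ) := by omega
    rw [hnk] at ht
    nlinarith [ht]
  -- x = y * y
  set y : Gmn m n ⧸ N := A ^ c' * B ^ ((k : ℤ) * t) with hy
  have hxy : A ^ c * B ^ d = y * y := by
    rw [hy, mul_form, hc', hd']
    ring_nf
  -- Frattini membership
  rw [frattini, Order.radical]
  simp only [Subgroup.mem_iInf, Set.mem_setOf_eq]
  intro M hM
  rw [hxy]
  by_cases hyM : y ∈ M
  · exact mul_mem hyM hyM
  -- CommGroup structure for mem_sup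
  letI : CommGroup (Gmn m n ⧸ N) :=
    { (inferInstance : Group (Gmn m n ⧸ N)) with
      mul_comm := fun x y => by
        obtain ⟨c1, d1, rfl⟩ := hgen x
        obtain ⟨c2, d2, rfl⟩ := hgen y
        rw [mul_form, mul_form, add_comm c1 c2, add_comm d1 d2] }
  set K : Subgroup (Gmn m n ⧸ N) := M ⊔ Subgroup.zpowers (y * y) with hK
  have hKne : K ≠ ⊤ := by
    intro htop
    apply hyM
    have hyK : y ∈ K := htop ▸ Subgroup.mem_top y
    rw [hK, Subgroup.mem_sup] at hyK
    obtain ⟨h, hh, z, hz, hE⟩ := hyK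
    obtain ⟨t', ht'⟩ := Subgroup.mem_zpowers_iff.mp hz
    have hh' : y ^ (1 - 2 * t') = h := by
      rw [← ht'] at hE
      have : h = y * ((y * y) ^ t')⁻¹ := eq_mul_inv_of_mul_eq hE
      rw [this, show y * y = y ^ (2 : ℤ) from (zpow_two y).symm, ← zpow_mul, ← zpow_neg,
        show (1 - 2 * t' : ℤ) = 1 + -(2 * t') by ring, zpow_add, zpow_one]
    have hcop : IsCoprime (1 - 2 * t') ((n : ℕ) : ℤ) := by
      rw [Int.isCoprime_iff_gcd_eq_one]
      obtain ⟨e, rfl⟩ := hn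
      have hodd : Odd ((1 - 2 * t').natAbs) := Int.natAbs_odd.mpr ⟨-t', by ring⟩
      show Nat.gcd (1 - 2 * t').natAbs ((2 ^ e : ℕ) : ℤ).natAbs = 1
      rw [Int.natAbs_natCast]
      exact Nat.Coprime.pow_right e hodd.coprime_two_right
    obtain ⟨u, v, huv⟩ := hcop
    have hyMpow : y ^ (1 - 2 * t') ∈ M := hh' ▸ hh
    have hyn : y ^ ((n : ℕ) : ℤ) = 1 := by rw [zpow_natCast, hexp]
    have : y = (y ^ (1 - 2 * t')) ^ u * (y ^ ((n : ℕ) : ℤ)) ^ v := by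
      rw [← zpow_mul, ← zpow_mul, ← zpow_add,
        show (1 - 2 * t') * u + (n : ℤ) * v = 1 by linarith [huv], zpow_one]
    rw [this, hyn, one_zpow, mul_one]
    exact Subgroup.zpow_mem M hyMpow u
  have hMK : M ≤ K := le_sup_left
  have hKM : K = M := by
    by_contra hne
    exact hKne (hM.2 K (lt_of_le_of_ne hMK (Ne.symm hne)))
  have : y * y ∈ K := hK ▸ Subgroup.mem_sup_right (Subgroup.mem_zpowers _)
  rwa [hKM] at this
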